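/- Let μ be as in the context with parameters a > 1, ε ∈ (0,1), k ∈ (0,1], s = (1+ε)/2, and assume (a+1)^{2k} ≥ 2. Then for all r > 0 with r ≠ a, one has 2 r^{−1} μ(r) − μ'(r) ≥ 0. -/

import Mathlib

open Real

/-- The weight function `μ` from Section 2. -/
noncomputable def mu (a s k r : ℝ) : ℝ :=
  if r ≤ a then (r + 1) ^ (2 * k) - 1
  else (a + 1) ^ (2 * k) - 1 + (a + 1) ^ (-2 * s + 1) - (r + 1) ^ (-2 * s + 1)

/-- The derivative of the weight function `μ` (for `r ≠ a`). -/
noncomputable def muDeriv (a s k r : ℝ) : ℝ :=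
  if r < a then 2 * k * (r + 1) ^ (2 * k - 1)
  else (2 * s - 1) * (r + 1) ^ (-(2 * s))

/-- Lemma 2.1, inequality (2.2): `2 r⁻¹ μ(r) - μ'(r) ≥ 0` for all `r > 0`, `r ≠ a`. -/
theorem mu_ineq_one (a ε k s : ℝ) (ha : 1 < a) (hε0 : 0 < ε) (hε1 : ε < 1)
    (hk0 : 0 < k) (hk1 : k ≤ 1) (hs : s = (1 + ε) / 2)
    (hbig : 2 ≤ (a + 1) ^ (2 * k)) :
    ∀ r : ℝ, 0 < r → r ≠ a → 2 * r⁻¹ * mu a s k r - muDeriv a s k r ≥ 0 := by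
  intro r hr hra
  have hr1 : (0:ℝ) < r + 1 := by linarith
  rcases lt_or_gt_of_ne hra with hlt | hgt
  · -- case r < a
    rw [mu, muDeriv, if_pos hlt.le, if_pos hlt]
    have hx0 : (0:ℝ) < (r+1)⁻¹ := inv_pos.mpr hr1
    have hx1 : (r+1)⁻¹ < 1 := by
      rw [inv_lt_one_iff₀]; right; linarith
    set x := (r+1)⁻¹ with hxdef
    -- Bernoulli: x^k ≤ 1 + k*(x-1)
    have hb : x ^ k ≤ 1 + k * (x - 1) := by
      have := rpow_one_add_le_one_add_mul_self (s := x - 1) (by linarith) hk0.le hk1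
      simpa using this
    have h2k : x ^ (2*k) ≤ x ^ k := by
      apply rpow_le_rpow_of_exponent_ge hx0 hx1.le; linarith
    -- key: 1 - x^(2k) ≥ k*(1-x)
    have key : k * (1 - x) ≤ 1 - x ^ (2*k) := by nlinarith
    -- translate back
    have hA : (0:ℝ) < (r+1) ^ (2*k) := rpow_pos_of_pos hr1 _
    have hxA : x ^ (2*k) = ((r+1) ^ (2*k))⁻¹ := by
      rw [hxdef, ← inv_rpow hr1.le]
    have hder : (r+1) ^ (2*k - 1) = (r+1) ^ (2*k) * x := by
      rw [hxdef, ← rpow_neg_one]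
      rw [← rpow_add hr1]; ring_nf
    have h1x : 1 - x = r * x := by
      rw [hxdef, ← div_eq_mul_inv, eq_div_iff hr1.ne', sub_mul, inv_mul_cancel₀ hr1.ne']; ring
    rw [hxA] at key
    have key2 : k * r * ((r+1) ^ (2*k) * x) ≤ (r+1) ^ (2*k) - 1 := by
      nlinarith [mul_le_mul_of_nonneg_left key hA.le,
        mul_inv_cancel₀ (ne_of_gt hA), h1x]
    rw [ge_iff_le, sub_nonneg, hder]
    nlinarith [key2, inv_pos.mpr hr, mul_inv_cancel₀ (ne_of_gt hr)]
  · -- case r > a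
    rw [mu, muDeriv, if_neg (not_le.mpr hgt), if_neg (not_lt.mpr hgt.le)]
    have ha1 : (0:ℝ) < a + 1 := by linarith
    have hM1 : (1:ℝ) ≤ (a + 1) ^ (2 * k) - 1 + (a + 1) ^ (-2 * s + 1) - (r + 1) ^ (-2 * s + 1) := by
      have hmono : (r + 1) ^ (-2*s + 1) ≤ (a + 1) ^ (-2*s + 1) := by
        apply rpow_le_rpow_of_nonpos ha1 (by linarith)
        rw [hs]; linarith
      linarith
    have hε' : 2 * s - 1 = ε := by rw [hs]; ring
    have hrhs : (2 * s - 1) * (r + 1) ^ (-(2 * s)) ≤ r⁻¹ := by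
      have h1 : (r+1) ^ (-(2*s)) ≤ (r+1) ^ (-1 : ℝ) := by
        apply rpow_le_rpow_of_exponent_le (by linarith)
        rw [hs]; linarith
      have h2 : (r+1) ^ (-1 : ℝ) = (r+1)⁻¹ := rpow_neg_one _
      have h3 : (r+1)⁻¹ ≤ r⁻¹ := by
        apply inv_anti₀ hr; linarith
      have hp : (0:ℝ) < (r+1) ^ (-(2*s)) := rpow_pos_of_pos hr1 _
      calc (2 * s - 1) * (r + 1) ^ (-(2 * s)) ≤ 1 * (r+1) ^ (-(2*s)) := by
            apply mul_le_mul_of_nonneg_right _ hp.le; rw [hε']; linarith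
        _ = (r+1) ^ (-(2*s)) := one_mul _
        _ ≤ r⁻¹ := by rw [h2] at h1; exact h1.trans h3
    have hlhs : r⁻¹ ≤ 2 * r⁻¹ * ((a + 1) ^ (2 * k) - 1 + (a + 1) ^ (-2 * s + 1) - (r + 1) ^ (-2 * s + 1)) := by
      have hri : (0:ℝ) < r⁻¹ := inv_pos.mpr hr
      nlinarith
    linarith
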